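/- Let T be a contraction on a Banach space. If some subsequence T^{n_k} converges to the identity I in the weak operator topology, then the weak limit semigroup of T equals the weak operator closure of {T^n : n ≥ 0}. -/

import Mathlib

open Filter

/-- `S` belongs to the weak limit semigroup of `T` (Banach space version, with weak
operator convergence tested against bounded functionals). -/
def IsWeakLimitOfPowers {X : Type*} [NormedAddCommGroup X] [NormedSpace ℂ X]
    (T S : X →L[ℂ] X) : Prop :=
  ∃ n : ℕ → ℕ, StrictMono n ∧
    ∀ (x : X) (φ : X →L[ℂ] ℂ),
      Tendsto (fun k => φ ((T ^ n k) x)) atTop (nhds (φ (S x)))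

/-- `S` belongs to the closure of the set `A` of operators in the weak operator
topology. -/
def MemWOTClosure {X : Type*} [NormedAddCommGroup X] [NormedSpace ℂ X]
    (A : Set (X →L[ℂ] X)) (S : X →L[ℂ] X) : Prop :=
  ∀ ε > (0 : ℝ), ∀ (r : ℕ) (x : Fin r → X) (φ : Fin r → (X →L[ℂ] ℂ)),
    ∃ U ∈ A, ∀ i : Fin r, ‖φ i (U (x i)) - φ i (S (x i))‖ < ε



section Aux
open TopologicalSpace
variable {X : Type*} [NormedAddCommGroup X] [NormedSpace ℂ X]

lemma sep_of_dual_sep {X : Type*} [NormedAddCommGroup X] [NormedSpace ℂ X]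
    [SeparableSpace (X →L[ℂ] ℂ)] : SeparableSpace X := by
  have : Nonempty (X →L[ℂ] ℂ) := ⟨0⟩
  set ψ := denseSeq (X →L[ℂ] ℂ) with hψdef
  have hψ : DenseRange ψ := denseRange_denseSeq _
  have hpt : ∀ n : ℕ, ∃ y : X, ‖y‖ ≤ 1 ∧ (ψ n ≠ 0 → ‖ψ n‖ / 2 < ‖ψ n y‖) := by
    intro n
    by_cases h : ψ n = 0
    · exact ⟨0, by simp, fun h' => absurd h h'⟩
    · obtain ⟨y, hy1, hy2⟩ := (ψ n).exists_lt_apply_of_lt_opNorm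
        (r := ‖ψ n‖ / 2) (by linarith [norm_pos_iff.2 h])
      exact ⟨y, hy1.le, fun _ => hy2⟩
  choose y hy1 hy2 using hpt
  set M : Submodule ℂ X := Submodule.span ℂ (Set.range y) with hM
  have hdense : closure (M : Set X) = Set.univ := by
    by_contra hcl
    obtain ⟨z, hz⟩ : ∃ z : X, z ∉ closure (M : Set X) := by
      by_contra h
      push_neg at h
      exact hcl (Set.eq_univ_of_forall h)
    have hconv : Convex ℝ (closure (M : Set X)) := by
      have : Convex ℝ (M : Set X) := by
        have := (M.restrictScalars ℝ).convex
        simpa using this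
      exact this.closure
    obtain ⟨f, c, hfc, hcz⟩ := geometric_hahn_banach_closed_point hconv isClosed_closure hz
    have hc0 : 0 < c := by
      have := hfc 0 (subset_closure M.zero_mem)
      simpa using this
    -- f vanishes on M
    have hf0 : ∀ w ∈ M, f w = 0 := by
      intro w hw
      by_contra hfw
      have key : ∀ t : ℝ, t * f w < c := by
        intro t
        have : (t : ℝ) • w ∈ M := by
          have : ((t : ℂ)) • w ∈ M := M.smul_mem _ hw
          simpa [Complex.coe_smul] using this
        have := hfc _ (subset_closure this)
        simpa using this
      have := key ((c + 1) / f w)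
      rw [div_mul_cancel₀ _ hfw] at this
      linarith
    -- complexify
    set g : X →L[ℂ] ℂ := StrongDual.extendRCLike f with hg
    have hgM : ∀ w ∈ M, g w = 0 := by
      intro w hw
      rw [ContinuousLinearMap.extendTo𝕜'_apply, hf0 w hw,
        hf0 _ (M.smul_mem (RCLike.I : ℂ) hw)]
      simp
    have hgz : g z ≠ 0 := by
      intro h
      rw [ContinuousLinearMap.extendTo𝕜'_apply] at h
      have := congrArg Complex.re h
      simp [RCLike.I_to_complex] at this
      linarith [hcz]
    have hgn : 0 < ‖g‖ := norm_pos_iff.2 (fun h => hgz (by rw [h]; simp))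
    obtain ⟨n, hn⟩ := hψ.exists_dist_lt g (by positivity : (0:ℝ) < ‖g‖ / 4)
    have hdist : ‖g - ψ n‖ < ‖g‖ / 4 := by rwa [dist_eq_norm] at hn
    have hψn : ψ n ≠ 0 := by
      intro h
      rw [h, sub_zero] at hdist
      linarith
    have h1 := hy2 n hψn
    have h2 : ‖ψ n (y n)‖ ≤ ‖g‖ / 4 := by
      have hgy : g (y n) = 0 := hgM _ (Submodule.subset_span ⟨n, rfl⟩)
      calc ‖ψ n (y n)‖ = ‖(ψ n - g) (y n)‖ := by
            rw [ContinuousLinearMap.sub_apply, hgy, sub_zero]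
        _ ≤ ‖ψ n - g‖ * ‖y n‖ := (ψ n - g).le_opNorm _
        _ ≤ ‖ψ n - g‖ * 1 := by
            have : (0:ℝ) ≤ ‖ψ n - g‖ := norm_nonneg _
            exact mul_le_mul_of_nonneg_left (hy1 n) this
        _ ≤ ‖g‖ / 4 := by rw [mul_one, norm_sub_rev]; exact hdist.le
    have h3 : ‖g‖ - ‖g‖ / 4 ≤ ‖ψ n‖ := by
      have := norm_sub_norm_le g (ψ n)
      linarith [hdist]
    linarith
  have : IsSeparable (Set.univ : Set X) := by
    rw [← hdense]
    exact (((Set.countable_range y).isSeparable).span).closure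
  exact isSeparable_univ_iff.1 this


lemma pow_apply_norm_le (T : X →L[ℂ] X) (hT : ‖T‖ ≤ 1) (m : ℕ) (v : X) :
    ‖(T ^ m) v‖ ≤ ‖v‖ := by
  induction m with
  | zero => simp
  | succ m ih =>
      rw [pow_succ', ContinuousLinearMap.mul_apply]
      calc ‖T ((T ^ m) v)‖ ≤ ‖T‖ * ‖(T ^ m) v‖ := T.le_opNorm _
        _ ≤ 1 * ‖v‖ := by
            have := norm_nonneg ((T ^ m) v)
            nlinarith [norm_nonneg v]
        _ = ‖v‖ := one_mul _

lemma fwd (T S : X →L[ℂ] X) (h : IsWeakLimitOfPowers T S) :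
    MemWOTClosure {U | ∃ n : ℕ, U = T ^ n} S := by
  obtain ⟨n, hmono, hconv⟩ := h
  intro ε hε r x φ
  have : ∀ i : Fin r, ∃ K : ℕ, ∀ k ≥ K,
      ‖φ i ((T ^ n k) (x i)) - φ i (S (x i))‖ < ε := by
    intro i
    obtain ⟨K, hK⟩ := (Metric.tendsto_atTop.1 (hconv (x i) (φ i))) ε hε
    exact ⟨K, fun k hk => by simpa [dist_eq_norm] using hK k hk⟩
  choose K hK using this
  set N := Finset.univ.sup K with hN
  exact ⟨T ^ n N, ⟨n N, rfl⟩, fun i => hK i N (Finset.le_sup (Finset.mem_univ i))⟩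


lemma S_norm_le (T S : X →L[ℂ] X) (hT : ‖T‖ ≤ 1)
    (hS : MemWOTClosure {U | ∃ n : ℕ, U = T ^ n} S) (v : X) : ‖S v‖ ≤ ‖v‖ := by
  by_cases h0 : S v = 0
  · rw [h0]; simp
  obtain ⟨g, hg1, hg2⟩ := exists_dual_vector ℂ (S v) (norm_ne_zero_iff.2 h0)
  have : ∀ ε > (0:ℝ), ‖S v‖ ≤ ‖v‖ + ε := by
    intro ε hε
    obtain ⟨U, ⟨m, rfl⟩, hU⟩ := hS ε hε 1 (fun _ => v) (fun _ => g)
    have h1 := hU 0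
    have h2 : ‖g ((T ^ m) v)‖ ≤ ‖v‖ := by
      calc ‖g ((T ^ m) v)‖ ≤ ‖g‖ * ‖(T ^ m) v‖ := g.le_opNorm _
        _ = ‖(T ^ m) v‖ := by rw [hg1, one_mul]
        _ ≤ ‖v‖ := pow_apply_norm_le T hT m v
    have h3 : ‖g (S v)‖ = ‖S v‖ := by rw [hg2]; simp
    calc ‖S v‖ = ‖g (S v)‖ := h3.symm
      _ = ‖g ((T ^ m) v) - (g ((T ^ m) v) - g (S v))‖ := by
          congr 1; ring
      _ ≤ ‖g ((T ^ m) v)‖ + ‖g ((T ^ m) v) - g (S v)‖ :=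
          norm_sub_le _ _
      _ ≤ ‖v‖ + ε := add_le_add h2 h1.le
  exact le_of_forall_pos_le_add this

lemma key_lemma (T S : X →L[ℂ] X)
    (hI : IsWeakLimitOfPowers T 1)
    (hS : MemWOTClosure {U | ∃ n : ℕ, U = T ^ n} S) :
    ∀ ε > (0:ℝ), ∀ (N r : ℕ) (x : Fin r → X) (φ : Fin r → (X →L[ℂ] ℂ)),
      ∃ m ≥ N, ∀ i : Fin r, ‖φ i ((T ^ m) (x i)) - φ i (S (x i))‖ < ε := by
  intro ε hε N r x φ
  obtain ⟨n, hn, hconv⟩ := hI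
  obtain ⟨U, ⟨m0, rfl⟩, hU⟩ := hS (ε / 2) (by linarith) r x φ
  -- for each i, φ i ∘ T^m0 applied to T^(n k) x i tends to φ i (T^m0 x i)
  have htend : ∀ i : Fin r, Tendsto
      (fun k => ((φ i).comp (T ^ m0)) ((T ^ n k) (x i))) atTop
      (nhds (((φ i).comp (T ^ m0)) (x i))) := by
    intro i
    have := hconv (x i) ((φ i).comp (T ^ m0))
    simpa using this
  have : ∀ i : Fin r, ∃ K : ℕ, ∀ k ≥ K,
      ‖φ i ((T ^ m0) ((T ^ n k) (x i))) - φ i ((T ^ m0) (x i))‖ < ε / 2 := by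
    intro i
    obtain ⟨K, hK⟩ := (Metric.tendsto_atTop.1 (htend i)) (ε / 2) (by linarith)
    refine ⟨K, fun k hk => ?_⟩
    have := hK k hk
    simpa [dist_eq_norm] using this
  choose K hK using this
  set k0 := max N (Finset.univ.sup K) with hk0
  refine ⟨m0 + n k0, le_trans (le_trans (le_max_left _ _) (hn.le_apply)) (Nat.le_add_left _ _), ?_⟩
  intro i
  have e1 : (T ^ (m0 + n k0)) (x i) = (T ^ m0) ((T ^ n k0) (x i)) := by
    rw [pow_add, ContinuousLinearMap.mul_apply]
  have h1 := hK i k0 (le_trans (Finset.le_sup (Finset.mem_univ i)) (le_max_right _ _))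
  have h2 := hU i
  calc ‖φ i ((T ^ (m0 + n k0)) (x i)) - φ i (S (x i))‖
      = ‖(φ i ((T ^ m0) ((T ^ n k0) (x i))) - φ i ((T ^ m0) (x i)))
          + (φ i ((T ^ m0) (x i)) - φ i (S (x i)))‖ := by rw [e1]; congr 1; ring
    _ ≤ ‖φ i ((T ^ m0) ((T ^ n k0) (x i))) - φ i ((T ^ m0) (x i))‖
          + ‖φ i ((T ^ m0) (x i)) - φ i (S (x i))‖ := norm_add_le _ _
    _ < ε / 2 + ε / 2 := add_lt_add h1 h2
    _ = ε := by ring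

lemma bwd [SeparableSpace (X →L[ℂ] ℂ)] (T S : X →L[ℂ] X) (hT : ‖T‖ ≤ 1)
    (hI : IsWeakLimitOfPowers T 1)
    (hS : MemWOTClosure {U | ∃ n : ℕ, U = T ^ n} S) :
    IsWeakLimitOfPowers T S := by
  have hSle := S_norm_le T S hT hS
  have key := key_lemma T S hI hS
  haveI : SeparableSpace X := sep_of_dual_sep
  haveI : Nonempty X := ⟨0⟩
  haveI : Nonempty (X →L[ℂ] ℂ) := ⟨0⟩
  set d : ℕ → X := denseSeq X with hd
  have hdd : DenseRange d := denseRange_denseSeq X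
  set ψ : ℕ → (X →L[ℂ] ℂ) := denseSeq _ with hψ
  have hψd : DenseRange ψ := denseRange_denseSeq _
  set p : ℕ → ℕ × ℕ := Nat.unpair with hp
  have hpsurj : ∀ i j : ℕ, ∃ k, p k = (i, j) := fun i j => ⟨Nat.pair i j, Nat.unpair_pair i j⟩
  -- recursive construction
  have hstep : ∀ (k prev : ℕ), ∃ m, prev < m ∧ ∀ i : Fin (k + 1),
      ‖ψ (p i.val).2 ((T ^ m) (d (p i.val).1)) - ψ (p i.val).2 (S (d (p i.val).1))‖
        < 1 / (k + 1) := by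
    intro k prev
    obtain ⟨m, hm, hmm⟩ := key (1 / (k + 1)) (by positivity) (prev + 1) (k + 1)
      (fun i => d (p i.val).1) (fun i => ψ (p i.val).2)
    exact ⟨m, by omega, hmm⟩
  choose! F hF1 hF2 using hstep
  set g : ℕ → ℕ := fun k => Nat.rec (F 0 0) (fun k ih => F (k + 1) ih) k with hg
  have hg0 : g 0 = F 0 0 := rfl
  have hgs : ∀ k, g (k + 1) = F (k + 1) (g k) := fun k => rfl
  have hgmono : StrictMono g := by
    apply strictMono_nat_of_lt_succ
    intro k
    rw [hgs]
    exact hF1 (k + 1) (g k)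
  have hgQ : ∀ k, ∀ i : Fin (k + 1),
      ‖ψ (p i.val).2 ((T ^ g k) (d (p i.val).1)) - ψ (p i.val).2 (S (d (p i.val).1))‖
        < 1 / (k + 1) := by
    intro k
    cases k with
    | zero => exact hF2 0 0
    | succ k => rw [hgs]; exact hF2 (k + 1) (g k)
  -- convergence on the countable family
  have hpair : ∀ i j : ℕ, Tendsto (fun k => ψ j ((T ^ g k) (d i))) atTop
      (nhds (ψ j (S (d i)))) := by
    intro i j
    obtain ⟨k0, hk0⟩ := hpsurj i j
    rw [Metric.tendsto_atTop]
    intro ε hε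
    obtain ⟨K0, hK0⟩ := exists_nat_one_div_lt hε
    refine ⟨max k0 K0, fun k hk => ?_⟩
    have hk1 : k0 ≤ k := le_trans (le_max_left _ _) hk
    have hk2 : K0 ≤ k := le_trans (le_max_right _ _) hk
    have := hgQ k ⟨k0, by omega⟩
    simp only [hk0] at this
    rw [dist_eq_norm]
    calc ‖ψ j ((T ^ g k) (d i)) - ψ j (S (d i))‖ < 1 / (k + 1) := this
      _ ≤ 1 / (K0 + 1) := by
          apply one_div_le_one_div_of_le (by positivity)
          have := (Nat.cast_le (α := ℝ)).2 hk2; linarith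
      _ < ε := hK0
  -- extend to all x, φ by density
  refine ⟨g, hgmono, ?_⟩
  intro x φ
  rw [Metric.tendsto_atTop]
  intro ε hε
  set C0 : ℝ := ‖x‖ + ‖φ‖ + 1 with hC0
  have hC0pos : 0 < C0 := by positivity
  set δ : ℝ := min 1 (ε / (6 * C0)) with hδ
  have hδpos : 0 < δ := lt_min one_pos (by positivity)
  have hδ1 : δ ≤ 1 := min_le_left _ _
  have hδ2 : δ * C0 ≤ ε / 6 := by
    have : δ ≤ ε / (6 * C0) := min_le_right _ _
    calc δ * C0 ≤ (ε / (6 * C0)) * C0 := mul_le_mul_of_nonneg_right this hC0pos.le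
      _ = ε / 6 := by field_simp
  obtain ⟨j, hj⟩ := hψd.exists_dist_lt φ hδpos
  obtain ⟨i, hi⟩ := hdd.exists_dist_lt x hδpos
  rw [dist_eq_norm] at hj hi
  -- bound A: ∀ k, ‖φ (T^gk x) - ψ j (T^gk (d i))‖ ≤ ε/6
  have hA : ∀ k, ‖φ ((T ^ g k) x) - ψ j ((T ^ g k) (d i))‖ ≤ ε / 6 := by
    intro k
    have e1 : φ ((T ^ g k) x) - ψ j ((T ^ g k) (d i))
        = (φ - ψ j) ((T ^ g k) x) + ψ j ((T ^ g k) (x - d i)) := by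
      simp only [ContinuousLinearMap.sub_apply, map_sub]; ring
    rw [e1]
    have b1 : ‖(φ - ψ j) ((T ^ g k) x)‖ ≤ δ * ‖x‖ := by
      calc ‖(φ - ψ j) ((T ^ g k) x)‖ ≤ ‖φ - ψ j‖ * ‖(T ^ g k) x‖ := (φ - ψ j).le_opNorm _
        _ ≤ δ * ‖x‖ := mul_le_mul hj.le (pow_apply_norm_le T hT _ x) (norm_nonneg _)
            hδpos.le
    have b2 : ‖ψ j ((T ^ g k) (x - d i))‖ ≤ (‖φ‖ + δ) * δ := by
      have hψjn : ‖ψ j‖ ≤ ‖φ‖ + δ := by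
        have := norm_sub_norm_le φ (ψ j)
        have h2 := norm_sub_rev φ (ψ j)
        linarith [hj, norm_sub_norm_le (ψ j) φ, norm_sub_rev (ψ j) φ ▸ hj]
      calc ‖ψ j ((T ^ g k) (x - d i))‖ ≤ ‖ψ j‖ * ‖(T ^ g k) (x - d i)‖ := (ψ j).le_opNorm _
        _ ≤ (‖φ‖ + δ) * δ := mul_le_mul hψjn
            (le_trans (pow_apply_norm_le T hT _ _) hi.le) (norm_nonneg _)
            (by positivity)
    calc ‖(φ - ψ j) ((T ^ g k) x) + ψ j ((T ^ g k) (x - d i))‖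
        ≤ ‖(φ - ψ j) ((T ^ g k) x)‖ + ‖ψ j ((T ^ g k) (x - d i))‖ := norm_add_le _ _
      _ ≤ δ * ‖x‖ + (‖φ‖ + δ) * δ := add_le_add b1 b2
      _ = δ * (‖x‖ + ‖φ‖ + δ) := by ring
      _ ≤ δ * C0 := by
          apply mul_le_mul_of_nonneg_left _ hδpos.le
          rw [hC0]; linarith [hδ1]
      _ ≤ ε / 6 := hδ2
  have hC : ‖ψ j (S (d i)) - φ (S x)‖ ≤ ε / 6 := by
    have e1 : ψ j (S (d i)) - φ (S x)
        = (ψ j - φ) (S (d i)) + φ (S (d i) - S x) := by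
      simp only [ContinuousLinearMap.sub_apply, map_sub]; ring
    rw [e1]
    have b1 : ‖(ψ j - φ) (S (d i))‖ ≤ δ * (‖x‖ + δ) := by
      have hdi : ‖d i‖ ≤ ‖x‖ + δ := by
        have := norm_sub_norm_le (d i) x
        have h2 : ‖d i - x‖ ≤ δ := by rw [norm_sub_rev]; exact hi.le
        linarith
      calc ‖(ψ j - φ) (S (d i))‖ ≤ ‖ψ j - φ‖ * ‖S (d i)‖ := (ψ j - φ).le_opNorm _
        _ ≤ δ * (‖x‖ + δ) := by
            have h3 : ‖ψ j - φ‖ ≤ δ := by rw [norm_sub_rev]; exact hj.le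
            exact mul_le_mul h3 (le_trans (hSle _) hdi) (norm_nonneg _) hδpos.le
    have b2 : ‖φ (S (d i) - S x)‖ ≤ ‖φ‖ * δ := by
      calc ‖φ (S (d i) - S x)‖ ≤ ‖φ‖ * ‖S (d i) - S x‖ := φ.le_opNorm _
        _ ≤ ‖φ‖ * δ := by
            apply mul_le_mul_of_nonneg_left _ (norm_nonneg φ)
            rw [← map_sub]
            refine le_trans (hSle _) ?_
            rw [norm_sub_rev]; exact hi.le
    calc ‖(ψ j - φ) (S (d i)) + φ (S (d i) - S x)‖
        ≤ ‖(ψ j - φ) (S (d i))‖ + ‖φ (S (d i) - S x)‖ := norm_add_le _ _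
      _ ≤ δ * (‖x‖ + δ) + ‖φ‖ * δ := add_le_add b1 b2
      _ = δ * (‖x‖ + ‖φ‖ + δ) := by ring
      _ ≤ δ * C0 := by
          apply mul_le_mul_of_nonneg_left _ hδpos.le
          rw [hC0]; linarith [hδ1]
      _ ≤ ε / 6 := hδ2
  -- middle term via hpair
  obtain ⟨K, hK⟩ := (Metric.tendsto_atTop.1 (hpair i j)) (ε / 6) (by positivity)
  refine ⟨K, fun k hk => ?_⟩
  have hB := hK k hk
  rw [dist_eq_norm] at hB ⊢
  calc ‖φ ((T ^ g k) x) - φ (S x)‖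
      = ‖(φ ((T ^ g k) x) - ψ j ((T ^ g k) (d i)))
          + (ψ j ((T ^ g k) (d i)) - ψ j (S (d i)))
          + (ψ j (S (d i)) - φ (S x))‖ := by congr 1; ring
    _ ≤ ‖φ ((T ^ g k) x) - ψ j ((T ^ g k) (d i))‖
          + ‖ψ j ((T ^ g k) (d i)) - ψ j (S (d i))‖
          + ‖ψ j (S (d i)) - φ (S x)‖ := norm_add₃_le
    _ < ε := by
        have h1 := hA k
        have h3 := hC
        linarith

end Aux

/-- If some subsequence of powers of the contraction `T` converges to the identity in
the weak operator topology, then the weak limit semigroup of `T` equals the weak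
operator closure of `{T^n : n ≥ 0}`. -/
theorem stmt_9 {X : Type*} [NormedAddCommGroup X] [NormedSpace ℂ X]
    [TopologicalSpace.SeparableSpace (X →L[ℂ] ℂ)]
    (T : X →L[ℂ] X) (hT : ‖T‖ ≤ 1)
    (hI : IsWeakLimitOfPowers T 1) :
    {S : X →L[ℂ] X | IsWeakLimitOfPowers T S} =
      {S : X →L[ℂ] X | MemWOTClosure {U | ∃ n : ℕ, U = T ^ n} S} := by
  ext S
  simp only [Set.mem_setOf_eq]
  exact ⟨fun h => fwd T S h, fun h => bwd T S hT hI h⟩
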